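/- Let F be a finite-dimensional solvable nonabelian Lie algebra over an algebraically closed field K of characteristic zero such that the centralizer of every nonzero element of F is abelian. Then F contains an abelian ideal A of codimension one (so F = A ⋊ ⟨b⟩ for any b ∈ F \ A), and the center of F is trivial. -/

import Mathlib

/-- Case 1 of Proposition 2: a finite-dimensional solvable nonabelian Lie algebra with all
centralizers of nonzero elements abelian has an abelian ideal `A` of codimension one
(so `F = A ⋊ ⟨b⟩` for any `b ∉ A`) and trivial center. -/
theorem solvable_case_abelian_centralizers
    (K F : Type*) [Field K] [IsAlgClosed K] [CharZero K]
    [LieRing F] [LieAlgebra K F] [FiniteDimensional K F]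
    [LieAlgebra.IsSolvable F]
    (hnonab : ¬ ∀ x y : F, ⁅x, y⁆ = 0)
    (hcent : ∀ x : F, x ≠ 0 → ∀ y z : F, ⁅x, y⁆ = 0 → ⁅x, z⁆ = 0 → ⁅y, z⁆ = 0) :
    (∃ A : LieIdeal K F, IsLieAbelian A ∧
        Module.finrank K A + 1 = Module.finrank K F ∧
        ∀ b : F, b ∉ A → ∀ x : F, ∃ a ∈ A, ∃ c : K, x = a + c • b) ∧
      ∀ z : F, (∀ y : F, ⁅z, y⁆ = 0) → z = 0 := by
  classical
  -- trivial center
  have hcenter : ∀ z : F, (∀ y : F, ⁅z, y⁆ = 0) → z = 0 := by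
    intro z hz
    by_contra hz0
    exact hnonab fun x y => hcent z hz0 x y (hz x) (hz y)
  refine ⟨?_, hcenter⟩
  -- F is nontrivial
  push_neg at hnonab
  obtain ⟨u, v, huv⟩ := hnonab
  have hu : u ≠ 0 := by rintro rfl; simp at huv
  have : Nontrivial F := ⟨u, 0, hu⟩
  have hnonab' : ¬ ∀ x y : F, ⁅x, y⁆ = 0 := by
    intro h; exact huv (h u v)
  -- a nonzero abelian ideal: last nonzero term of the derived series
  have hsolv : ∃ k, LieAlgebra.derivedSeries K F k = ⊥ :=
    LieAlgebra.IsSolvable.solvable (R := K) (L := F)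
  set n := Nat.find hsolv with hn
  have hn0 : n ≠ 0 := by
    intro h
    have := Nat.find_spec hsolv
    rw [← hn, h] at this
    simp only [LieAlgebra.derivedSeries_def, LieAlgebra.derivedSeriesOfIdeal_zero] at this
    have : u ∈ (⊥ : LieIdeal K F) := this ▸ LieSubmodule.mem_top u
    simp only [LieSubmodule.mem_bot] at this
    exact hu this
  set I := LieAlgebra.derivedSeries K F (n - 1) with hI
  have hIne : I ≠ ⊥ := Nat.find_min hsolv (Nat.sub_lt (Nat.pos_of_ne_zero hn0) one_pos)
  have hIbot : ⁅I, I⁆ = ⊥ := by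
    have h1 : LieAlgebra.derivedSeries K F (n - 1 + 1) = ⁅I, I⁆ := by
      rw [LieAlgebra.derivedSeries_def, LieAlgebra.derivedSeriesOfIdeal_succ]
    rw [← h1, Nat.sub_add_cancel (Nat.one_le_iff_ne_zero.mpr hn0)]
    exact Nat.find_spec hsolv
  have hIab : ∀ x ∈ I, ∀ y ∈ I, ⁅x, y⁆ = 0 := by
    intro x hx y hy
    exact (LieSubmodule.lie_eq_bot_iff I I).mp hIbot x hx y hy
  -- pick a nonzero element of I
  have hInt : Nontrivial I := by rwa [LieSubmodule.nontrivial_iff_ne_bot]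
  obtain ⟨⟨x₀, hx₀I⟩, hx₀ne⟩ := exists_ne (0 : I)
  have hx₀ : x₀ ≠ 0 := by
    intro h; exact hx₀ne (Subtype.ext h)
  -- A := centralizer of x₀, an abelian ideal
  let A : LieIdeal K F :=
    { carrier := {y | ⁅x₀, y⁆ = 0}
      add_mem' := by intro a b ha hb; simp only [Set.mem_setOf_eq] at *; rw [lie_add, ha, hb, add_zero]
      zero_mem' := by simp
      smul_mem' := by intro c y hy; simp only [Set.mem_setOf_eq] at *; rw [lie_smul, hy, smul_zero]
      lie_mem := by
        intro f m hm
        simp only [Set.mem_setOf_eq] at *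
        have h1 : ⁅x₀, ⁅f, m⁆⁆ = ⁅⁅x₀, f⁆, m⁆ + ⁅f, ⁅x₀, m⁆⁆ := leibniz_lie x₀ f m
        rw [hm, lie_zero, add_zero] at h1
        have h2 : ⁅x₀, f⁆ ∈ I := by
          have : ⁅f, x₀⁆ ∈ I := I.lie_mem hx₀I
          have h := neg_mem this
          rw [lie_skew] at h
          exact h
        have h3 : ⁅x₀, ⁅x₀, f⁆⁆ = 0 := hIab x₀ hx₀I _ h2
        have h4 : ⁅m, ⁅x₀, f⁆⁆ = 0 := hcent x₀ hx₀ m _ hm h3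
        have h5 : ⁅⁅x₀, f⁆, m⁆ = 0 := by
          rw [← neg_eq_zero, lie_skew, h4]
        rw [h1, h5] }
  have hAmem : ∀ y : F, y ∈ A ↔ ⁅x₀, y⁆ = 0 := fun y => Iff.rfl
  have hx₀A : x₀ ∈ A := (hAmem x₀).mpr (lie_self x₀)
  have hAab : ∀ y ∈ A, ∀ z ∈ A, ⁅y, z⁆ = 0 := by
    intro y hy z hz
    exact hcent x₀ hx₀ y z ((hAmem y).mp hy) ((hAmem z).mp hz)
  -- key absorption: commuting with a nonzero element of A puts you in A
  have step4 : ∀ a : F, a ∈ A → a ≠ 0 → ∀ y : F, ⁅a, y⁆ = 0 → y ∈ A := by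
    intro a ha ha0 y hy
    have hax : ⁅a, x₀⁆ = 0 := hAab a ha x₀ hx₀A
    exact (hAmem y).mpr (hcent a ha0 x₀ y hax hy)
  -- there is an element outside A
  have hbex : ∃ b : F, b ∉ A := by
    by_contra h
    push_neg at h
    exact huv (hAab u (h u) v (h v))
  have hAnontriv : Nontrivial A := ⟨⟨x₀, hx₀A⟩, 0, by simp [Subtype.ext_iff, hx₀]⟩
  -- action of an element on A
  have hrestrict : ∀ b : F, ∀ a ∈ (A : LieIdeal K F).toSubmodule,
      (LieAlgebra.ad K F b) a ∈ (A : LieIdeal K F).toSubmodule := by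
    intro b a ha
    exact A.lie_mem ha
  let T : F → (A →ₗ[K] A) := fun b => (LieAlgebra.ad K F b).restrict (hrestrict b)
  have hTapply : ∀ b : F, ∀ a : A, ((T b a : A) : F) = ⁅b, (a : F)⁆ := by
    intro b a; rfl
  have hTinj : ∀ b : F, b ∉ A → Function.Injective (T b) := by
    intro b hb
    rw [← LinearMap.ker_eq_bot]
    rw [Submodule.eq_bot_iff]
    rintro ⟨a, haA⟩ hker
    rw [LinearMap.mem_ker] at hker
    have h1 : ⁅b, a⁆ = 0 := by
      have := congrArg (Subtype.val) hker
      rwa [hTapply] at this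
    by_contra h0
    have ha0 : a ≠ 0 := by
      intro h; exact h0 (by simp [h])
    have : ⁅a, b⁆ = 0 := by rw [← neg_eq_zero, lie_skew, h1]
    exact hb (step4 a haA ha0 b this)
  have hTbij : ∀ b : F, b ∉ A → Function.Bijective (T b) := by
    intro b hb
    exact ⟨hTinj b hb, (LinearMap.injective_iff_surjective).mp (hTinj b hb)⟩
  -- decomposition lemma
  have decomp : ∀ b : F, b ∉ A → ∀ x : F, x ∉ A → ∃ c : K, x - c • b ∈ A := by
    intro b hb x hx
    let e : A ≃ₗ[K] A := LinearEquiv.ofBijective (T b) (hTbij b hb)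
    let S : Module.End K A := (e.symm : A →ₗ[K] A) ∘ₗ (T x)
    obtain ⟨c, hc⟩ := Module.End.exists_eigenvalue S
    obtain ⟨a, ha⟩ := hc.exists_hasEigenvector
    have haS : S a = c • a := ha.apply_eq_smul
    have ha0 : (a : F) ≠ 0 := by
      intro h
      exact ha.right (Subtype.ext h)
    have h1 : T x a = e (c • a) := by
      have : e.symm (T x a) = c • a := haS
      rw [← this, e.apply_symm_apply]
    have h2 : ⁅x, (a : F)⁆ = c • ⁅b, (a : F)⁆ := by
      have := congrArg Subtype.val h1
      rw [hTapply] at this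
      have he : ((e (c • a) : A) : F) = c • ⁅b, (a : F)⁆ := by
        have : e (c • a) = T b (c • a) := rfl
        rw [this]
        have := hTapply b (c • a)
        rw [this]
        simp [lie_smul]
      rw [he] at this
      exact this
    have h3 : ⁅x - c • b, (a : F)⁆ = 0 := by
      rw [sub_lie, smul_lie, h2, sub_self]
    have h4 : ⁅(a : F), x - c • b⁆ = 0 := by
      rw [← neg_eq_zero, lie_skew, h3]
    exact ⟨c, step4 a a.2 ha0 _ h4⟩
  have hspan : ∀ b : F, b ∉ A → ∀ x : F, ∃ a ∈ A, ∃ c : K, x = a + c • b := by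
    intro b hb x
    by_cases hx : x ∈ A
    · exact ⟨x, hx, 0, by simp⟩
    · obtain ⟨c, hc⟩ := decomp b hb x hx
      exact ⟨x - c • b, hc, c, (sub_add_cancel x (c • b)).symm⟩
  -- codimension one
  obtain ⟨b, hb⟩ := hbex
  have hb0 : b ≠ 0 := by
    intro h; rw [h] at hb; exact hb (zero_mem A)
  have hsup : (A : Submodule K F) ⊔ (K ∙ b) = ⊤ := by
    rw [Submodule.eq_top_iff']
    intro x
    obtain ⟨a, ha, c, rfl⟩ := hspan b hb x
    exact Submodule.add_mem_sup ha (Submodule.smul_mem _ c (Submodule.mem_span_singleton_self b))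
  have hinf : (A : Submodule K F) ⊓ (K ∙ b) = ⊥ := by
    rw [Submodule.eq_bot_iff]
    rintro y ⟨hyA, hyb⟩
    obtain ⟨c, rfl⟩ := Submodule.mem_span_singleton.mp hyb
    by_contra h0
    have hc : c ≠ 0 := by intro h; exact h0 (by simp [h])
    have : b ∈ (A : Submodule K F) := by
      have := Submodule.smul_mem (A : Submodule K F) c⁻¹ hyA
      rwa [inv_smul_smul₀ hc] at this
    exact hb this
  have hrank := Submodule.finrank_sup_add_finrank_inf_eq (A : Submodule K F) (K ∙ b)
  rw [hsup, hinf, finrank_top, finrank_bot, add_zero, finrank_span_singleton hb0] at hrank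
  refine ⟨A, ⟨fun a b => ?_⟩, hrank.symm, hspan⟩
  apply Subtype.ext
  have : (⁅a, b⁆ : A) = ⟨⁅(a : F), (b : F)⁆, A.lie_mem b.2⟩ := rfl
  rw [this]
  exact hAab a a.2 b b.2
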